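/- Let M be a Möbius transformation, p(z) = ∏_{j=1}^n (z - α_j), and p̃(z) = ∏_{j=1}^n (z - M(α_j)). Then, wherever both sides are defined, M(EA_p(z_i; z_1,…,ẑ_i,…,z_n)) = EA_{p̃}(M(z_i); M(z_1),…,M(ẑ_i),…,M(z_n)), where EA is the Ehrlich–Aberth update step. -/

import Mathlib

/-- `q` associated to roots `β`, approximation vector `v` and index `i`. -/
noncomputable def eaQ (n : ℕ) (β v : Fin n → ℂ) (i : Fin n) : ℂ → ℂ :=
  fun x => (∏ j, (x - β j)) / ∏ j ∈ Finset.univ.erase i, (x - v j)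

/-- The Ehrlich–Aberth update step `EA_p(v i; v_1,…,v̂_i,…,v_n) = v i - q(v i)/q'(v i)`
for the monic polynomial with roots `β`. -/
noncomputable def eaStep (n : ℕ) (β v : Fin n → ℂ) (i : Fin n) : ℂ :=
  v i - eaQ n β v i (v i) / deriv (eaQ n β v i) (v i)

/-- The Möbius transformation `z ↦ (a z + b)/(c z + d)` acting on finite points. -/
noncomputable def mobiusMap (a b c d z : ℂ) : ℂ := (a * z + b) / (c * z + d)

lemma mobius_sub (a b c d u v : ℂ) (hu : c * u + d ≠ 0) (hv : c * v + d ≠ 0) :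
    mobiusMap a b c d u - mobiusMap a b c d v
      = (a * d - b * c) * (u - v) / ((c * u + d) * (c * v + d)) := by
  unfold mobiusMap
  rw [div_sub_div _ _ hu hv]
  ring

set_option maxHeartbeats 2000000 in
theorem stmt3 (n : ℕ) (a b c d : ℂ) (hM : a * d - b * c ≠ 0)
    (α z : Fin n → ℂ) (i : Fin n)
    (hz : ∀ j, j ≠ i → z i ≠ z j)
    (hdz : ∀ j, c * z j + d ≠ 0) (hdα : ∀ j, c * α j + d ≠ 0)
    (hdEA : c * eaStep n α z i + d ≠ 0)
    (hdef : deriv (eaQ n α z i) (z i) ≠ 0)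
    (hdef' : deriv (eaQ n (fun j => mobiusMap a b c d (α j))
        (fun j => mobiusMap a b c d (z j)) i) (mobiusMap a b c d (z i)) ≠ 0) :
    mobiusMap a b c d (eaStep n α z i) =
      eaStep n (fun j => mobiusMap a b c d (α j)) (fun j => mobiusMap a b c d (z j)) i := by
  obtain ⟨m, rfl⟩ : ∃ m, n = m + 1 := ⟨n - 1, (Nat.succ_pred_eq_of_pos i.pos).symm⟩
  set β : Fin (m+1) → ℂ := fun j => mobiusMap a b c d (α j) with hβ
  set w : Fin (m+1) → ℂ := fun j => mobiusMap a b c d (z j) with hw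
  set s : Finset (Fin (m+1)) := Finset.univ.erase i with hs
  set x : ℂ := z i with hxdef
  set Δ : ℂ := a * d - b * c with hΔ
  have hcx : c * x + d ≠ 0 := hdz i
  -- basic functions
  set N : ℂ → ℂ := fun y => ∏ j, (y - α j) with hNdef
  set D : ℂ → ℂ := fun y => ∏ j ∈ s, (y - z j) with hDdef
  set A : ℂ := ∏ j, (c * α j + d) with hA
  set B : ℂ := ∏ j ∈ s, (c * z j + d) with hB
  have hAne : A ≠ 0 := Finset.prod_ne_zero_iff.mpr fun j _ => hdα j
  have hBne : B ≠ 0 := Finset.prod_ne_zero_iff.mpr fun j _ => hdz j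
  have hDx : D x ≠ 0 := by
    refine Finset.prod_ne_zero_iff.mpr fun j hj => sub_ne_zero.mpr ?_
    exact hz j (Finset.mem_erase.mp hj).1
  have hNdiff : ∀ y : ℂ, DifferentiableAt ℂ N y := fun y =>
    DifferentiableAt.fun_finsetProd fun j _ => (differentiableAt_id.sub_const (α j))
  have hDdiff : ∀ y : ℂ, DifferentiableAt ℂ D y := fun y =>
    DifferentiableAt.fun_finsetProd fun j _ => (differentiableAt_id.sub_const (z j))
  set N' : ℂ := deriv N x with hN'
  set D' : ℂ := deriv D x with hD'
  have hNx : HasDerivAt N N' x := (hNdiff x).hasDerivAt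
  have hDDx : HasDerivAt D D' x := (hDdiff x).hasDerivAt
  -- derivative of q on the untransformed side
  have hq'val : deriv (eaQ (m+1) α z i) x = (N' * D x - N x * D') / (D x) ^ 2 :=
    (hNx.div hDDx hDx).deriv
  set E : ℂ := N' * D x - N x * D' with hE
  have hEne : E ≠ 0 := by
    intro h
    apply hdef
    rw [hq'val, h, zero_div]
  -- the Möbius map as a function
  set M : ℂ → ℂ := fun y => mobiusMap a b c d y with hMdef
  have hMd : HasDerivAt M (Δ / (c * x + d) ^ 2) x := by
    have h1 : HasDerivAt (fun y : ℂ => a * y + b) a x := by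
      simpa using ((hasDerivAt_id x).const_mul a).add_const b
    have h2 : HasDerivAt (fun y : ℂ => c * y + d) c x := by
      simpa using ((hasDerivAt_id x).const_mul c).add_const d
    have h3 := h1.div h2 hcx
    have : (a * (c * x + d) - (a * x + b) * c) / (c * x + d) ^ 2 = Δ / (c * x + d) ^ 2 := by
      rw [hΔ]; ring_nf
    rw [this] at h3
    exact h3
  -- key pointwise identity
  have key : ∀ y : ℂ, c * y + d ≠ 0 →
      eaQ (m+1) β w i (M y) = (Δ * B / A) * (N y / ((c * y + d) * D y)) := by
    intro y hy
    have hnum : (∏ j, (M y - β j)) = Δ ^ (m+1) * N y / ((c * y + d) ^ (m+1) * A) := by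
      have h1 : ∀ j : Fin (m+1), M y - β j = Δ * (y - α j) / ((c * y + d) * (c * α j + d)) :=
        fun j => mobius_sub a b c d y (α j) hy (hdα j)
      rw [Finset.prod_congr rfl (fun j _ => h1 j)]
      rw [Finset.prod_div_distrib, Finset.prod_mul_distrib, Finset.prod_mul_distrib,
        Finset.prod_const, Finset.prod_const, Finset.card_univ, Fintype.card_fin]
    have hden : (∏ j ∈ s, (M y - w j)) = Δ ^ m * D y / ((c * y + d) ^ m * B) := by
      have h1 : ∀ j ∈ s, M y - w j = Δ * (y - z j) / ((c * y + d) * (c * z j + d)) :=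
        fun j _ => mobius_sub a b c d y (z j) hy (hdz j)
      rw [Finset.prod_congr rfl h1]
      rw [Finset.prod_div_distrib, Finset.prod_mul_distrib, Finset.prod_mul_distrib,
        Finset.prod_const, Finset.prod_const]
      have : s.card = m := by
        rw [hs, Finset.card_erase_of_mem (Finset.mem_univ i), Finset.card_univ,
          Fintype.card_fin]
        omega
      rw [this]
    show (∏ j, (M y - β j)) / (∏ j ∈ s, (M y - w j)) = _
    rw [hnum, hden]
    rcases eq_or_ne (D y) 0 with h | h
    · simp [h]
    · field_simp
      ring
  -- eventual equality near x
  have hev : (eaQ (m+1) β w i) ∘ M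
      =ᶠ[nhds x] fun y => (Δ * B / A) * (N y / ((c * y + d) * D y)) := by
    have hcont : ContinuousAt (fun y : ℂ => c * y + d) x := by fun_prop
    filter_upwards [hcont.eventually_ne hcx] with y hy using key y hy
  -- nonvanishing of the transformed denominator at M x
  have hDtne : (∏ j ∈ s, (M x - w j)) ≠ 0 := by
    refine Finset.prod_ne_zero_iff.mpr fun j hj => ?_
    have hji : j ≠ i := (Finset.mem_erase.mp hj).1
    rw [show M x = mobiusMap a b c d x from rfl,
      mobius_sub a b c d x (z j) hcx (hdz j)]
    exact div_ne_zero (mul_ne_zero hM (sub_ne_zero.mpr (hz j hji)))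
      (mul_ne_zero hcx (hdz j))
  -- differentiability of transformed q at M x
  have hqt : DifferentiableAt ℂ (eaQ (m+1) β w i) (M x) := by
    have h1 : DifferentiableAt ℂ (fun y => ∏ j, (y - β j)) (M x) :=
      DifferentiableAt.fun_finsetProd fun j _ => (differentiableAt_id.sub_const (β j))
    have h2 : DifferentiableAt ℂ (fun y => ∏ j ∈ s, (y - w j)) (M x) :=
      DifferentiableAt.fun_finsetProd fun j _ => (differentiableAt_id.sub_const (w j))
    exact h1.div h2 hDtne
  -- chain rule
  have hcomp : HasDerivAt ((eaQ (m+1) β w i) ∘ M)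
      (deriv (eaQ (m+1) β w i) (M x) * (Δ / (c * x + d) ^ 2)) x :=
    (hqt.hasDerivAt).comp x hMd
  -- derivative of the explicit local form
  have hcy : HasDerivAt (fun y : ℂ => c * y + d) c x := by
    simpa using ((hasDerivAt_id x).const_mul c).add_const d
  have hg : HasDerivAt (fun y => (Δ * B / A) * (N y / ((c * y + d) * D y)))
      ((Δ * B / A) * ((N' * ((c * x + d) * D x) - N x * (c * D x + (c * x + d) * D'))
        / ((c * x + d) * D x) ^ 2)) x :=
    (hNx.div (hcy.mul hDDx) (mul_ne_zero hcx hDx)).const_mul _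
  have hderiv_eq : deriv (eaQ (m+1) β w i) (M x) * (Δ / (c * x + d) ^ 2)
      = (Δ * B / A) * ((N' * ((c * x + d) * D x) - N x * (c * D x + (c * x + d) * D'))
        / ((c * x + d) * D x) ^ 2) := by
    rw [← hcomp.deriv, hev.deriv_eq, hg.deriv]
  set F : ℂ := (c * x + d) * E - c * (N x * D x) with hF
  have hVt : deriv (eaQ (m+1) β w i) (M x) = B * F / (A * (D x) ^ 2) := by
    have hk : (Δ / (c * x + d) ^ 2) ≠ 0 := div_ne_zero hM (pow_ne_zero _ hcx)
    have h1 : deriv (eaQ (m+1) β w i) (M x)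
        = ((Δ * B / A) * ((N' * ((c * x + d) * D x) - N x * (c * D x + (c * x + d) * D'))
          / ((c * x + d) * D x) ^ 2)) / (Δ / (c * x + d) ^ 2) :=
      (eq_div_iff hk).mpr hderiv_eq
    rw [h1, hF, hE]
    field_simp
    ring
  have hFne : F ≠ 0 := by
    intro h
    apply hdef'
    show deriv (eaQ (m+1) β w i) (M x) = 0
    rw [hVt, h, mul_zero, zero_div]
  -- unfold the two steps
  have ht : (N x / D x) / (E / (D x) ^ 2) = N x * D x / E := by
    field_simp
  have hstepL : eaStep (m+1) α z i = x - N x * D x / E := by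
    show x - eaQ (m+1) α z i x / deriv (eaQ (m+1) α z i) x = _
    have hQx : eaQ (m+1) α z i x = N x / D x := rfl
    rw [hQx, hq'val, ht]
  have hstepR : eaStep (m+1) β w i
      = M x - ((Δ * B / A) * (N x / ((c * x + d) * D x))) / (B * F / (A * (D x) ^ 2)) := by
    show M x - eaQ (m+1) β w i (M x) / deriv (eaQ (m+1) β w i) (M x) = _
    rw [key x hcx, hVt]
  have hdEA' : c * (x - N x * D x / E) + d ≠ 0 := hstepL ▸ hdEA
  have hden2 : c * (x - N x * D x / E) + d = F / E := by
    rw [hF]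
    field_simp
    ring
  rw [hstepL, hstepR]
  show (a * (x - N x * D x / E) + b) / (c * (x - N x * D x / E) + d)
      = (a * x + b) / (c * x + d)
        - ((Δ * B / A) * (N x / ((c * x + d) * D x))) / (B * F / (A * (D x) ^ 2))
  rw [hden2]
  have hterm : ((Δ * B / A) * (N x / ((c * x + d) * D x))) / (B * F / (A * (D x) ^ 2))
      = Δ * (N x * D x) / ((c * x + d) * F) := by
    field_simp
  rw [hterm]
  rw [div_div_eq_mul_div]
  have hnum : (a * (x - N x * D x / E) + b) * E = (a * x + b) * E - a * (N x * D x) := by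
    field_simp
    ring
  rw [hnum]
  have hFne' : (c * x + d) * E - c * (N x * D x) ≠ 0 := hF ▸ hFne
  rw [hF, hΔ]
  rw [div_sub_div _ _ hcx (mul_ne_zero hcx hFne'),
    div_eq_div_iff hFne' (mul_ne_zero hcx (mul_ne_zero hcx hFne'))]
  ring
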